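/- Let μ be a finite measure and h : X → ℝ≥0 a bounded measurable function with ∫ h^p dμ > 0 for all p ≥ 0. Then the function f(p) = (∫ h^{p−1} dμ)/(∫ h^p dμ) is monotone decreasing on [1,∞). -/

import Mathlib

open MeasureTheory
open scoped ENNReal

/-- Membership in ℒ^{1/θ} of `h ^ (θ * a)` from integrability of `h ^ a`. -/
lemma aux_memLp {X : Type*} [MeasurableSpace X] {μ : Measure X}
    {h : X → ℝ} (hmeas : Measurable h) (hnonneg : ∀ x, 0 ≤ h x) {a θ : ℝ} (hθ : 0 < θ)
    (hinta : Integrable (fun x => h x ^ a) μ) :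
    MemLp (fun x => h x ^ (θ * a)) (ENNReal.ofReal (1 / θ)) μ := by
  have h1 : MemLp (fun x => h x ^ a) 1 μ := (memLp_one_iff_integrable).2 hinta
  have h2 := h1.norm_rpow_div (ENNReal.ofReal θ)
  have hexp : (1 : ℝ≥0∞) / ENNReal.ofReal θ = ENNReal.ofReal (1 / θ) := by
    rw [one_div, one_div, ENNReal.ofReal_inv_of_pos hθ]
  rw [hexp] at h2
  refine h2.congr_norm ?_ ?_
  · exact (show Measurable fun x => h x ^ (θ * a) by measurability).aestronglyMeasurable
  · filter_upwards with x
    rw [ENNReal.toReal_ofReal hθ.le, Real.norm_of_nonneg (Real.rpow_nonneg (hnonneg x) a),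
      ← Real.rpow_mul (hnonneg x), mul_comm a θ]

/-- Hölder interpolation: log-convexity of `p ↦ ∫ h ^ p`. -/
lemma aux_interp {X : Type*} [MeasurableSpace X] (μ : Measure X)
    (h : X → ℝ) (hmeas : Measurable h) (hnonneg : ∀ x, 0 ≤ h x)
    (a b θ : ℝ) (hθ : 0 < θ) (hθ1 : θ < 1)
    (hab : θ * a + (1 - θ) * b ≠ 0)
    (hinta : Integrable (fun x => h x ^ a) μ)
    (hintb : Integrable (fun x => h x ^ b) μ) :
    ∫ x, h x ^ (θ * a + (1 - θ) * b) ∂μ ≤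
      (∫ x, h x ^ a ∂μ) ^ θ * (∫ x, h x ^ b ∂μ) ^ (1 - θ) := by
  have hθ1' : 0 < 1 - θ := by linarith
  have hpq : (1 / θ).HolderConjugate (1 / (1 - θ)) := by
    rw [Real.holderConjugate_iff]; constructor
    · rw [lt_div_iff₀ hθ]; linarith
    · rw [one_div, one_div, inv_inv, inv_inv]; ring
  have key := integral_mul_le_Lp_mul_Lq_of_nonneg hpq
    (f := fun x => h x ^ (θ * a)) (g := fun x => h x ^ ((1 - θ) * b))
    (Filter.Eventually.of_forall fun x => Real.rpow_nonneg (hnonneg x) _)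
    (Filter.Eventually.of_forall fun x => Real.rpow_nonneg (hnonneg x) _)
    (aux_memLp hmeas hnonneg hθ hinta) (aux_memLp hmeas hnonneg hθ1' hintb)
  simp only [one_div_one_div] at key
  calc ∫ x, h x ^ (θ * a + (1 - θ) * b) ∂μ
      = ∫ x, h x ^ (θ * a) * h x ^ ((1 - θ) * b) ∂μ := by
        refine integral_congr_ae (Filter.Eventually.of_forall fun x => ?_)
        exact Real.rpow_add' (hnonneg x) hab
    _ ≤ (∫ x, (h x ^ (θ * a)) ^ (1 / θ) ∂μ) ^ θ *
          (∫ x, (h x ^ ((1 - θ) * b)) ^ (1 / (1 - θ)) ∂μ) ^ (1 - θ) := key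
    _ = (∫ x, h x ^ a ∂μ) ^ θ * (∫ x, h x ^ b ∂μ) ^ (1 - θ) := by
        congr 1
        · congr 1
          refine integral_congr_ae (Filter.Eventually.of_forall fun x => ?_)
          show (h x ^ (θ * a)) ^ (1 / θ) = h x ^ a
          rw [← Real.rpow_mul (hnonneg x)]
          congr 1
          field_simp
        · congr 1
          refine integral_congr_ae (Filter.Eventually.of_forall fun x => ?_)
          show (h x ^ ((1 - θ) * b)) ^ (1 / (1 - θ)) = h x ^ b
          rw [← Real.rpow_mul (hnonneg x)]
          congr 1
          field_simp

/-- f(p) = (∫ h^{p−1})/(∫ h^p) is monotone decreasing on [1,∞). -/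
theorem stmt_5 {X : Type*} [MeasurableSpace X] (μ : Measure X) [IsFiniteMeasure μ]
    (h : X → ℝ) (hmeas : Measurable h) (hnonneg : ∀ x, 0 ≤ h x)
    (M : ℝ) (hbound : ∀ x, h x ≤ M)
    (hpos : ∀ p : ℝ, 0 ≤ p → 0 < ∫ x, h x ^ p ∂μ)
    (hint : ∀ p : ℝ, 0 ≤ p → Integrable (fun x => h x ^ p) μ) :
    AntitoneOn (fun p : ℝ => (∫ x, h x ^ (p - 1) ∂μ) / (∫ x, h x ^ p ∂μ))
      (Set.Ici 1) := by
  intro p hp q hq hpq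
  simp only [Set.mem_Ici] at hp hq
  rcases eq_or_lt_of_le hpq with rfl | hlt
  · exact le_refl _
  have hden : (0:ℝ) < q - p + 1 := by linarith
  set θ : ℝ := (q - p) / (q - p + 1) with hθdef
  have hθ0 : 0 < θ := div_pos (by linarith) hden
  have hθ1 : θ < 1 := (div_lt_one hden).2 (by linarith)
  have hA := hpos (p - 1) (by linarith)
  have hB := hpos p (by linarith)
  have hC := hpos (q - 1) (by linarith)
  have hD := hpos q (by linarith)
  have hintA := hint (p - 1) (by linarith)
  have hintD := hint q (by linarith)
  have he1 : θ * (p - 1) + (1 - θ) * q = p := by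
    rw [hθdef]; field_simp; ring
  have he2 : (1 - θ) * (p - 1) + (1 - (1 - θ)) * q = q - 1 := by
    rw [hθdef]; field_simp; ring
  have H1 := aux_interp μ h hmeas hnonneg (p - 1) q θ hθ0 hθ1
    (by rw [he1]; linarith) hintA hintD
  have H2 := aux_interp μ h hmeas hnonneg (p - 1) q (1 - θ) (by linarith) (by linarith)
    (by rw [he2]; linarith) hintA hintD
  rw [he1] at H1
  rw [he2] at H2
  simp only
  rw [div_le_div_iff₀ hD hB]
  calc (∫ x, h x ^ (q - 1) ∂μ) * ∫ x, h x ^ p ∂μ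
      ≤ ((∫ x, h x ^ (p - 1) ∂μ) ^ (1 - θ) * (∫ x, h x ^ q ∂μ) ^ (1 - (1 - θ))) *
        ((∫ x, h x ^ (p - 1) ∂μ) ^ θ * (∫ x, h x ^ q ∂μ) ^ (1 - θ)) := by
        apply mul_le_mul H2 H1 hB.le
        positivity
    _ = (∫ x, h x ^ (p - 1) ∂μ) * ∫ x, h x ^ q ∂μ := by
        have e : (1 : ℝ) - (1 - θ) = θ := by ring
        rw [e, mul_mul_mul_comm, ← Real.rpow_add hA, ← Real.rpow_add hD]
        norm_num
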